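/- Let S ⊆ {0,1}^n be the set of minimizers of h_max, assume S is a proper subset, let λ₁ be the minimum value of h_max, λ₂ = min over b ∉ S of h_max(b), assume λ₁ > 0, and let r = (λ₂ − λ₁)/λ₁. If the positive integer p satisfies (p : ℝ) > log M / log(r + 1), then every minimizer of h_p over {0,1}^n belongs to S; i.e., the optimal solution of the approximation is an optimal solution of the original multi-objective problem. -/

import Mathlib

/-- **Degenerate case: minimizers of the approximation are true minimizers.**
Let `S` be the set of minimizers of `h_max`, a proper subset, `λ₁ > 0` the
minimum value, `λ₂ = min_{b ∉ S} h_max(b)`, `r = (λ₂ − λ₁)/λ₁`.  If the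
positive integer `p` satisfies `(p : ℝ) > log M / log (r + 1)`, then every
minimizer of `h_p` belongs to `S`. -/
theorem moqa_degenerate_recovery
    (n M p : ℕ) (hM : 1 ≤ M) (hp : 1 ≤ p) (hn : 1 ≤ n)
    (h : Fin M → (Fin n → Bool) → ℝ)
    (hnn : ∀ m b, 0 ≤ h m b)
    (hmax hP : (Fin n → Bool) → ℝ)
    (hmax_def : ∀ b, IsGreatest (Set.range fun m => h m b) (hmax b))
    (hP_def : ∀ b, hP b = ∑ m : Fin M, (h m b) ^ p)
    (lam1 lam2 r : ℝ)
    (hlam1 : IsLeast (Set.range hmax) lam1)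
    (hlam1pos : 0 < lam1)
    (S : Set (Fin n → Bool))
    (hS : S = {b | hmax b = lam1})
    (hproper : ∃ b, b ∉ S)
    (hlam2 : IsLeast (hmax '' Sᶜ) lam2)
    (hr : r = (lam2 - lam1) / lam1)
    (hpbig : (p : ℝ) > Real.log M / Real.log (r + 1)) :
    ∀ bstar, (∀ b, hP bstar ≤ hP b) → bstar ∈ S := by

  intro bstar hopt
  by_contra hns
  -- minimizer b0 of hmax
  obtain ⟨b0, hb0⟩ := hlam1.1
  have hb0S : hmax b0 = lam1 := hb0
  -- lam2 attained by some b2 ∉ S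
  obtain ⟨b2, hb2c, hb2⟩ := hlam2.1
  have h12 : lam1 < lam2 := by
    have hle : lam1 ≤ lam2 := hb2 ▸ hlam1.2 ⟨b2, rfl⟩
    rcases lt_or_eq_of_le hle with h' | h'
    · exact h'
    · exfalso; apply hb2c; rw [hS]; exact (h' ▸ hb2 : hmax b2 = lam1)
  have hr1 : r + 1 = lam2 / lam1 := by
    rw [hr]; field_simp; ring
  have hgt1 : (1:ℝ) < r + 1 := by
    rw [hr1]; exact (one_lt_div hlam1pos).mpr h12
  have hlogpos : 0 < Real.log (r + 1) := Real.log_pos hgt1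
  have hMpos : (0:ℝ) < M := by exact_mod_cast Nat.lt_of_lt_of_le Nat.zero_lt_one hM
  have hlogM : Real.log M < (p:ℝ) * Real.log (r + 1) := (div_lt_iff₀ hlogpos).mp hpbig
  have hMlt : (M:ℝ) < (r + 1) ^ p := by
    have := hlogM
    rw [← Real.log_pow] at this
    have hpow : (0:ℝ) < (r+1) ^ p := pow_pos (lt_trans one_pos hgt1) p
    exact (Real.log_lt_log_iff hMpos hpow).mp this
  have key : (M:ℝ) * lam1 ^ p < lam2 ^ p := by
    have hlp : (0:ℝ) < lam1 ^ p := pow_pos hlam1pos p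
    have := mul_lt_mul_of_pos_right hMlt hlp
    calc (M:ℝ) * lam1 ^ p < (r+1)^p * lam1 ^ p := this
      _ = lam2 ^ p := by rw [hr1, div_pow, div_mul_cancel₀]; exact ne_of_gt hlp
  -- hP b0 ≤ M * lam1^p
  have hub : hP b0 ≤ (M:ℝ) * lam1 ^ p := by
    rw [hP_def]
    calc ∑ m : Fin M, h m b0 ^ p ≤ ∑ _m : Fin M, lam1 ^ p := by
          apply Finset.sum_le_sum
          intro m _
          apply pow_le_pow_left₀ (hnn m b0)
          have := (hmax_def b0).2 ⟨m, rfl⟩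
          rw [hb0S] at this; exact this
      _ = (M:ℝ) * lam1 ^ p := by simp [Finset.sum_const, mul_comm]
  -- hP bstar ≥ lam2^p
  have hlow : lam2 ^ p ≤ hP bstar := by
    obtain ⟨m, hm⟩ := (hmax_def bstar).1
    have h1 : lam2 ≤ hmax bstar := hlam2.2 ⟨bstar, hns, rfl⟩
    have h2 : lam2 ^ p ≤ (h m bstar) ^ p := by
      apply pow_le_pow_left₀ (le_of_lt (lt_trans hlam1pos h12))
      exact le_of_le_of_eq h1 hm.symm
    rw [hP_def]
    refine le_trans h2 (Finset.single_le_sum (fun i _ => pow_nonneg (hnn i bstar) p) (Finset.mem_univ m))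
  have := hopt b0
  linarith
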